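/- Suppose a nonnegative function N defined on the closed upper half-plane {z ∈ ℂ : Im z ≥ 0} is continuous, satisfies N(z) ≤ C(1+|z|²)e^{A Im z} everywhere for constants A, C > 0, satisfies N(iτ) ≤ C(1+τ²)e^{-Bτ} on the positive imaginary axis for some B > 0, and log N is subharmonic. Then there exist constants C', b > 0 (depending on A, B, C) such that N(z) ≤ C'(1+|z|²) e^{-b Im z} for all z in the sector {z : Im z ≥ |Re z|}. -/

import Mathlib

open Complex

section Aux
open Set Filter

lemma sqle {u M T : ℝ} (hM : 0 ≤ M) (h : u ^ 2 ≤ M ^ 2 * Real.exp (2 * T)) :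
    u ≤ M * Real.exp T := by
  have hrhs : (M * Real.exp T) ^ 2 = M ^ 2 * Real.exp (2 * T) := by
    rw [mul_pow, pow_two (Real.exp T), ← Real.exp_add, ← two_mul]
  refine le_of_pow_le_pow_left₀ two_ne_zero (by positivity) ?_
  rw [hrhs]; exact h

lemma abs_add_I_sq_ge (z : ℂ) (hz : 0 ≤ z.im) :
    1 + ‖z‖ ^ 2 ≤ ‖z + I‖ ^ 2 := by
  rw [Complex.sq_norm, Complex.sq_norm, Complex.normSq_apply, Complex.normSq_apply]
  simp only [Complex.add_re, Complex.add_im, Complex.I_re, Complex.I_im]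
  nlinarith

lemma abs_add_I_sq_le (z : ℂ) (hz : 0 ≤ z.im) :
    ‖z + I‖ ^ 2 ≤ 2 * (1 + ‖z‖ ^ 2) := by
  rw [Complex.sq_norm, Complex.sq_norm, Complex.normSq_apply, Complex.normSq_apply]
  simp only [Complex.add_re, Complex.add_im, Complex.I_re, Complex.I_im]
  nlinarith [sq_nonneg (z.im - 1)]

lemma sectorPL {E : Type*} [NormedAddCommGroup E] [NormedSpace ℂ E]
    (g : ℂ → E) {θ₁ θ₂ M K : ℝ} (h0 : 0 < θ₁) (h12 : θ₁ < θ₂) (h2 : θ₂ < Real.pi)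
    (hK : 0 ≤ K)
    (hd : DifferentiableOn ℂ g {z : ℂ | 0 < z.im})
    (hc : ContinuousOn g {z : ℂ | 0 ≤ z.im})
    (hgrow : ∀ z : ℂ, 0 ≤ z.im → ‖g z‖ ≤ M * Real.exp (K * ‖z‖))
    (hray1 : ∀ r : ℝ, 0 ≤ r → ‖g ((r : ℂ) * Complex.exp (θ₁ * Complex.I))‖ ≤ M)
    (hray2 : ∀ r : ℝ, 0 ≤ r → ‖g ((r : ℂ) * Complex.exp (θ₂ * Complex.I))‖ ≤ M)
    {z : ℂ} (hz : z ≠ 0) (ha1 : θ₁ ≤ Complex.arg z) (ha2 : Complex.arg z ≤ θ₂) :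
    ‖g z‖ ≤ M := by
  have hexp : ∀ w : ℂ, Complex.exp w
      = ((Real.exp w.re : ℝ) : ℂ) * Complex.exp ((w.im : ℂ) * Complex.I) := by
    intro w
    rw [Complex.ofReal_exp, ← Complex.exp_add, Complex.re_add_im]
  have him : ∀ w : ℂ, (Complex.exp w).im = Real.exp w.re * Real.sin w.im := Complex.exp_im
  have key : ‖g (Complex.exp (Complex.log z))‖ ≤ M := by
    apply PhragmenLindelof.horizontal_strip
      (a := θ₁) (b := θ₂) (f := fun w => g (Complex.exp w))
    · constructor
      · apply hd.comp Complex.differentiable_exp.differentiableOn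
        intro w hw
        simp only [mem_preimage, mem_Ioo, mem_setOf_eq] at *
        rw [him]
        exact mul_pos (Real.exp_pos _)
          (Real.sin_pos_of_pos_of_lt_pi (h0.trans hw.1) (hw.2.trans h2))
      · have hsub : closure (Complex.im ⁻¹' Ioo θ₁ θ₂) ⊆ Complex.im ⁻¹' Icc θ₁ θ₂ :=
          closure_minimal (preimage_mono Ioo_subset_Icc_self)
            (isClosed_Icc.preimage Complex.continuous_im)
        apply hc.comp Complex.continuous_exp.continuousOn
        intro w hw
        have hw' := hsub hw
        simp only [mem_preimage, mem_Icc, mem_setOf_eq] at *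
        rw [him]
        exact mul_nonneg (Real.exp_pos _).le
          (Real.sin_nonneg_of_nonneg_of_le_pi (h0.le.trans hw'.1) (hw'.2.trans h2.le))
    · refine ⟨1, ?_, K, ?_⟩
      · rw [lt_div_iff₀ (by linarith)]
        linarith
      · rw [Asymptotics.isBigO_iff]
        refine ⟨M, Filter.eventually_inf_principal.2 (Filter.Eventually.of_forall
          fun w hw => ?_)⟩
        simp only [mem_preimage, mem_Ioo] at hw
        have h1 : 0 ≤ (Complex.exp w).im := by
          rw [him]
          exact mul_nonneg (Real.exp_pos _).le
            (Real.sin_nonneg_of_nonneg_of_le_pi (by linarith [hw.1]) (by linarith [hw.2]))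
        refine (hgrow _ h1).trans ?_
        rw [Real.norm_eq_abs, abs_of_pos (Real.exp_pos _)]
        have : K * ‖Complex.exp w‖ ≤ K * Real.exp (1 * |w.re|) := by
          rw [Complex.norm_exp]
          exact mul_le_mul_of_nonneg_left
            (Real.exp_le_exp.2 (by rw [one_mul]; exact le_abs_self _)) hK
        exact mul_le_mul_of_nonneg_left (Real.exp_le_exp.2 this)
          ((norm_nonneg (g 0)).trans (by simpa using hray1 0 le_rfl))
    · intro w hw
      show ‖g (Complex.exp w)‖ ≤ M
      rw [hexp w, hw]
      exact hray1 _ (Real.exp_pos _).le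
    · intro w hw
      show ‖g (Complex.exp w)‖ ≤ M
      rw [hexp w, hw]
      exact hray2 _ (Real.exp_pos _).le
    · rw [Complex.log_im]; exact ha1
    · rw [Complex.log_im]; exact ha2
  rwa [Complex.exp_log hz] at key

set_option maxHeartbeats 1000000 in
lemma oneSide {E : Type*} [NormedAddCommGroup E] [NormedSpace ℂ E]
    (F : ℂ → E) (A B C : ℝ) (hA : 0 < A) (hB : 0 < B) (hC : 0 < C)
    (hol : DifferentiableOn ℂ F {z : ℂ | 0 < z.im})
    (hcont : ContinuousOn F {z : ℂ | 0 ≤ z.im})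
    (hgrow : ∀ z : ℂ, 0 ≤ z.im → ‖F z‖ ^ 2 ≤ C * (1 + ‖z‖ ^ 2) * Real.exp (A * z.im))
    (haxis : ∀ τ : ℝ, 0 ≤ τ → ‖F ((τ : ℂ) * Complex.I)‖ ^ 2 ≤ C * (1 + τ ^ 2) * Real.exp (-B * τ))
    (p θ₁ θ₂ : ℝ) (h0 : 0 < θ₁) (h12 : θ₁ < θ₂) (h2 : θ₂ < Real.pi)
    (hp : |p| ≤ B / 8)
    (hray : ∀ θ ∈ ({θ₁, θ₂} : Set ℝ), (∀ r : ℝ, 0 ≤ r →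
      A * (r * Real.sin θ) + 2 * p * (r * Real.cos θ) + (B / 2) * (r * Real.sin θ) ≤ 0)
      ∨ θ = Real.pi / 2)
    {z : ℂ} (hz : z ≠ 0) (ha1 : θ₁ ≤ Complex.arg z) (ha2 : Complex.arg z ≤ θ₂) :
    ‖F z‖ ^ 2 ≤ 2 * C * (1 + ‖z‖ ^ 2) *
      Real.exp (-(2 * p * z.re + (B / 2) * z.im)) := by
  set c : ℂ := (p : ℂ) - ((B / 4 : ℝ) : ℂ) * Complex.I with hcdef
  set G : ℂ → E := fun w => (Complex.exp (c * w) / (w + Complex.I)) • F w with hGdef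
  have hsC : (0:ℝ) ≤ Real.sqrt C := Real.sqrt_nonneg C
  have hsq : Real.sqrt C ^ 2 = C := Real.sq_sqrt hC.le
  have hcz : ∀ w : ℂ, (c * w).re = p * w.re + (B / 4) * w.im := by
    intro w
    simp only [hcdef, Complex.mul_re, Complex.sub_re, Complex.sub_im, Complex.ofReal_re,
      Complex.ofReal_im, Complex.mul_im, Complex.I_re, Complex.I_im]
    ring
  have hden0 : ∀ w : ℂ, 0 ≤ w.im → w + Complex.I ≠ 0 := by
    intro w hw h
    have := congrArg Complex.im h
    simp at this
    linarith
  have hnorm : ∀ w : ℂ, ‖G w‖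
      = Real.exp (p * w.re + (B / 4) * w.im) / ‖w + Complex.I‖ * ‖F w‖ := by
    intro w
    rw [hGdef]
    simp only [norm_smul, norm_div, Complex.norm_exp, hcz]
  have hGsq : ∀ w : ℂ, 0 ≤ w.im →
      ‖G w‖ ^ 2 ≤ C * Real.exp (A * w.im + 2 * p * w.re + (B / 2) * w.im) := by
    intro w hw
    have hd : 0 < ‖w + Complex.I‖ := by
      simpa [AbsoluteValue.pos_iff] using hden0 w hw
    have hkey := abs_add_I_sq_ge w hw
    have hFw := hgrow w hw
    calc ‖G w‖ ^ 2
        = Real.exp (p * w.re + (B / 4) * w.im) ^ 2 * ‖F w‖ ^ 2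
            / ‖w + Complex.I‖ ^ 2 := by rw [hnorm w]; ring
      _ ≤ Real.exp (p * w.re + (B / 4) * w.im) ^ 2
            * (C * (1 + ‖w‖ ^ 2) * Real.exp (A * w.im))
            / ‖w + Complex.I‖ ^ 2 := by gcongr
      _ ≤ Real.exp (p * w.re + (B / 4) * w.im) ^ 2
            * (C * (‖w + Complex.I‖ ^ 2) * Real.exp (A * w.im))
            / ‖w + Complex.I‖ ^ 2 := by gcongr
      _ = C * (Real.exp (p * w.re + (B / 4) * w.im) ^ 2 * Real.exp (A * w.im)) := by
            field_simp
      _ = C * Real.exp (A * w.im + 2 * p * w.re + (B / 2) * w.im) := by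
            rw [pow_two, ← Real.exp_add, ← Real.exp_add]
            ring_nf
  have hrayG : ∀ θ ∈ ({θ₁, θ₂} : Set ℝ), ∀ r : ℝ, 0 ≤ r →
      ‖G ((r : ℂ) * Complex.exp ((θ : ℂ) * Complex.I))‖ ≤ Real.sqrt C := by
    intro θ hθ r hr
    have hθ1 : 0 < θ := by
      rcases hθ with rfl | h
      · exact h0
      · simp only [mem_singleton_iff] at h
        subst h
        linarith
    have hθ2 : θ < Real.pi := by
      rcases hθ with rfl | h
      · linarith
      · simp only [mem_singleton_iff] at h
        subst h
        exact h2
    have hre : ((r : ℂ) * Complex.exp ((θ : ℂ) * Complex.I)).re = r * Real.cos θ := by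
      simp [Complex.exp_mul_I, Complex.mul_re, ← Complex.ofReal_cos, ← Complex.ofReal_sin]
    have himw : ((r : ℂ) * Complex.exp ((θ : ℂ) * Complex.I)).im = r * Real.sin θ := by
      simp [Complex.exp_mul_I, Complex.mul_im, ← Complex.ofReal_cos, ← Complex.ofReal_sin]
    have him0 : 0 ≤ ((r : ℂ) * Complex.exp ((θ : ℂ) * Complex.I)).im := by
      rw [himw]
      exact mul_nonneg hr (Real.sin_nonneg_of_nonneg_of_le_pi hθ1.le hθ2.le)
    rcases hray θ hθ with hle | hax
    · refine le_of_pow_le_pow_left₀ two_ne_zero hsC ?_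
      rw [hsq]
      refine (hGsq _ him0).trans ?_
      have hexple : Real.exp (A * ((r : ℂ) * Complex.exp ((θ : ℂ) * Complex.I)).im
          + 2 * p * ((r : ℂ) * Complex.exp ((θ : ℂ) * Complex.I)).re
          + (B / 2) * ((r : ℂ) * Complex.exp ((θ : ℂ) * Complex.I)).im) ≤ 1 := by
        rw [Real.exp_le_one_iff, hre, himw]
        linarith [hle r hr]
      nlinarith [Real.exp_pos (A * ((r : ℂ) * Complex.exp ((θ : ℂ) * Complex.I)).im
          + 2 * p * ((r : ℂ) * Complex.exp ((θ : ℂ) * Complex.I)).re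
          + (B / 2) * ((r : ℂ) * Complex.exp ((θ : ℂ) * Complex.I)).im)]
    · subst hax
      have hwI : (r : ℂ) * Complex.exp (((Real.pi / 2 : ℝ) : ℂ) * Complex.I)
          = (r : ℂ) * Complex.I := by
        rw [Complex.exp_mul_I, ← Complex.ofReal_cos, ← Complex.ofReal_sin,
          Real.cos_pi_div_two, Real.sin_pi_div_two]
        simp
      rw [hwI]
      refine le_of_pow_le_pow_left₀ two_ne_zero hsC ?_
      rw [hsq]
      have hre' : ((r : ℂ) * Complex.I).re = 0 := by simp
      have him' : ((r : ℂ) * Complex.I).im = r := by simp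
      have habsd : ‖(r : ℂ) * Complex.I + Complex.I‖ = r + 1 := by
        have : (r : ℂ) * Complex.I + Complex.I = ((r + 1 : ℝ) : ℂ) * Complex.I := by
          push_cast; ring
        rw [this, norm_mul, Complex.norm_real, Complex.norm_I, mul_one]
        exact abs_of_nonneg (by linarith)
      have hFb := haxis r hr
      have h3 : (1 : ℝ) + r ^ 2 ≤ (r + 1) ^ 2 := by nlinarith
      have h4 : Real.exp (p * 0 + (B / 4) * r) ^ 2 * Real.exp (-B * r)
          = Real.exp (-(B / 2) * r) := by
        rw [pow_two, ← Real.exp_add, ← Real.exp_add]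
        ring_nf
      have h5 : Real.exp (-(B / 2) * r) ≤ 1 := by
        rw [Real.exp_le_one_iff]
        nlinarith
      have hrpos : (0:ℝ) < r + 1 := by linarith
      calc ‖G ((r : ℂ) * Complex.I)‖ ^ 2
          = Real.exp (p * 0 + (B / 4) * r) ^ 2 * ‖F ((r : ℂ) * Complex.I)‖ ^ 2
              / (r + 1) ^ 2 := by
                rw [hnorm, hre', him', habsd]
                field_simp
        _ ≤ Real.exp (p * 0 + (B / 4) * r) ^ 2 * (C * (1 + r ^ 2) * Real.exp (-B * r))
              / (r + 1) ^ 2 := by gcongr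
        _ ≤ Real.exp (p * 0 + (B / 4) * r) ^ 2 * (C * ((r + 1) ^ 2) * Real.exp (-B * r))
              / (r + 1) ^ 2 := by gcongr
        _ = C * (Real.exp (p * 0 + (B / 4) * r) ^ 2 * Real.exp (-B * r)) := by
              field_simp
        _ = C * Real.exp (-(B / 2) * r) := by rw [h4]
        _ ≤ C := by nlinarith
  have hGle : ‖G z‖ ≤ Real.sqrt C := by
    have := sectorPL G h0 h12 h2 (K := (A + B) / 2) (M := Real.sqrt C) (by linarith)
      ?_ ?_ ?_ ?_ ?_ hz ha1 ha2
    · exact this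
    · apply DifferentiableOn.smul ?_ hol
      apply DifferentiableOn.div
      · exact (Complex.differentiable_exp.comp (differentiable_id.const_mul c)).differentiableOn
      · exact (differentiable_id.add_const Complex.I).differentiableOn
      · exact fun w hw => hden0 w (le_of_lt hw)
    · apply ContinuousOn.smul ?_ hcont
      apply ContinuousOn.div
      · exact (Complex.continuous_exp.comp (continuous_const.mul continuous_id)).continuousOn
      · exact (continuous_id.add continuous_const).continuousOn
      · exact fun w hw => hden0 w hw
    · intro w hw
      apply sqle hsC
      rw [hsq]
      refine (hGsq w hw).trans ?_
      have h1 : |w.re| ≤ ‖w‖ := Complex.abs_re_le_norm w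
      have h2' : w.im ≤ ‖w‖ := le_trans (le_abs_self _) (Complex.abs_im_le_norm w)
      have h3 : 2 * p * w.re ≤ 2 * (|p| * |w.re|) := by
        have h := le_abs_self (p * w.re)
        rw [abs_mul] at h
        linarith
      have h4 : |p| * |w.re| ≤ (B / 8) * ‖w‖ := by
        apply mul_le_mul hp h1 (abs_nonneg _) (by linarith)
      have habs : (0:ℝ) ≤ ‖w‖ := norm_nonneg w
      have hexp : A * w.im + 2 * p * w.re + (B / 2) * w.im
          ≤ 2 * ((A + B) / 2 * ‖w‖) := by
        have e1 : A * w.im ≤ A * ‖w‖ := by nlinarith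
        have e2 : (B / 2) * w.im ≤ (B / 2) * ‖w‖ := by nlinarith
        nlinarith
      exact mul_le_mul_of_nonneg_left (Real.exp_le_exp.2 hexp) hC.le
    · exact hrayG θ₁ (Or.inl rfl)
    · exact hrayG θ₂ (Or.inr rfl)
  -- final algebra
  have himz : 0 < z.im := by
    have hs : Real.sin (Complex.arg z) = z.im / ‖z‖ := Complex.sin_arg z
    have habs : 0 < ‖z‖ := norm_pos_iff.2 hz
    have hsinpos : 0 < Real.sin (Complex.arg z) :=
      Real.sin_pos_of_pos_of_lt_pi (h0.trans_le ha1) (lt_of_le_of_lt ha2 h2)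
    rw [hs] at hsinpos
    rcases div_pos_iff.1 hsinpos with h | h
    · exact h.1
    · linarith [h.2, habs]
  have hdpos : 0 < ‖z + Complex.I‖ := by
    simpa [AbsoluteValue.pos_iff] using hden0 z himz.le
  have hepos : (0:ℝ) < Real.exp (p * z.re + (B / 4) * z.im) := Real.exp_pos _
  have hFz : ‖F z‖ = ‖G z‖ * (‖z + Complex.I‖
      / Real.exp (p * z.re + (B / 4) * z.im)) := by
    rw [hnorm z]
    field_simp
  have hGsq' : ‖G z‖ ^ 2 ≤ C := by
    have := pow_le_pow_left₀ (norm_nonneg _) hGle 2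
    rwa [hsq] at this
  have hd2 := abs_add_I_sq_le z himz.le
  calc ‖F z‖ ^ 2
      = ‖G z‖ ^ 2 * (‖z + Complex.I‖ ^ 2
          / Real.exp (p * z.re + (B / 4) * z.im) ^ 2) := by rw [hFz]; ring
    _ ≤ C * ((2 * (1 + ‖z‖ ^ 2))
          / Real.exp (p * z.re + (B / 4) * z.im) ^ 2) := by gcongr
    _ = 2 * C * (1 + ‖z‖ ^ 2) * Real.exp (-(2 * p * z.re + (B / 2) * z.im)) := by
        have he2 : Real.exp (p * z.re + (B / 4) * z.im) ^ 2
            = Real.exp (2 * p * z.re + (B / 2) * z.im) := by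
          rw [pow_two (Real.exp (p * z.re + (B / 4) * z.im)), ← Real.exp_add]
          ring_nf
        rw [he2, Real.exp_neg]
        field_simp


end Aux

set_option maxHeartbeats 1000000 in
/- STATEMENT 13: Phragmén–Lindelöf propagation.  N(z) = ‖F z‖² with F
   holomorphic in the open upper half-plane and continuous up to the boundary
   (this realizes the subharmonicity of log N), N(z) ≤ C(1+|z|²)e^{A Im z} on
   {Im z ≥ 0} and N(iτ) ≤ C(1+τ²)e^{-Bτ} for τ ≥ 0.  Then there are C', b > 0
   with N(z) ≤ C'(1+|z|²)e^{-b Im z} on the sector {Im z ≥ |Re z|}. -/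
theorem stmt13 {E : Type*} [NormedAddCommGroup E] [NormedSpace ℂ E]
    (F : ℂ → E) (A B C : ℝ) (hA : 0 < A) (hB : 0 < B) (hC : 0 < C)
    (hol : DifferentiableOn ℂ F {z : ℂ | 0 < z.im})
    (hcont : ContinuousOn F {z : ℂ | 0 ≤ z.im})
    (hgrow : ∀ z : ℂ, 0 ≤ z.im → ‖F z‖ ^ 2 ≤ C * (1 + ‖z‖ ^ 2) * Real.exp (A * z.im))
    (haxis : ∀ τ : ℝ, 0 ≤ τ → ‖F ((τ : ℂ) * Complex.I)‖ ^ 2 ≤ C * (1 + τ ^ 2) * Real.exp (-B * τ)) :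
    ∃ C' : ℝ, 0 < C' ∧ ∃ b : ℝ, 0 < b ∧ ∀ z : ℂ, |z.re| ≤ z.im →
      ‖F z‖ ^ 2 ≤ C' * (1 + ‖z‖ ^ 2) * Real.exp (-b * z.im) := by
  have hπ := Real.pi_pos
  set t : ℝ := B / (4 * A + 2 * B) with ht_def
  have ht0 : 0 < t := div_pos hB (by linarith)
  have ht1 : t < 1 := by
    rw [ht_def, div_lt_one (by linarith)]
    linarith
  set ε : ℝ := Real.arctan t with hε_def
  have hε0 : 0 < ε := by
    rw [hε_def, ← Real.arctan_zero]
    exact Real.arctan_strictMono ht0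
  have hεlt : ε < Real.pi / 4 := by
    rw [hε_def, ← Real.arctan_one]
    exact Real.arctan_strictMono ht1
  have hcos : 0 < Real.cos ε := Real.cos_arctan_pos t
  have hsin : Real.sin ε = t * Real.cos ε := by
    have h := Real.tan_arctan t
    rw [Real.tan_eq_sin_div_cos, ← hε_def, div_eq_iff hcos.ne'] at h
    exact h
  have hkey : (A + B / 2) * Real.sin ε = (B / 4) * Real.cos ε := by
    rw [hsin]
    have : (A + B / 2) * t = B / 4 := by
      rw [ht_def]
      field_simp
      ring
    nlinarith [this]
  refine ⟨2 * C, by linarith, B / 4, by linarith, ?_⟩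
  intro z hxy
  rcases eq_or_ne z 0 with rfl | hz0
  · have h0 := hgrow 0 (by simp)
    simp only [Complex.zero_re, Complex.zero_im, map_zero, norm_zero, mul_zero, neg_zero, Real.exp_zero,
      abs_zero] at *
    nlinarith [norm_nonneg (F 0), h0]
  · have him0 : 0 < z.im := by
      rcases ((abs_nonneg z.re).trans hxy).lt_or_eq with h | h
      · exact h
      · exfalso
        apply hz0
        have hre : z.re = 0 := by
          have := hxy
          rw [← h] at this
          simpa using abs_nonpos_iff.1 this
        exact Complex.ext hre h.symm
    have habs : 0 < ‖z‖ := norm_pos_iff.2 hz0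
    have hs2 : Real.sqrt 2 ^ 2 = 2 := Real.sq_sqrt (by norm_num)
    have hs2pos : 0 < Real.sqrt 2 := Real.sqrt_pos.2 (by norm_num)
    have hr2 : ‖z‖ ≤ Real.sqrt 2 * z.im := by
      refine le_of_pow_le_pow_left₀ two_ne_zero (by positivity) ?_
      rw [mul_pow, hs2, Complex.sq_norm, Complex.normSq_apply]
      nlinarith [hxy, _root_.sq_abs z.re, abs_nonneg z.re]
    have harcsin : Real.pi / 4 ≤ Real.arcsin (z.im / ‖z‖) := by
      have h1 : z.im / ‖z‖ ≤ 1 := by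
        rw [div_le_one habs]
        exact le_trans (le_abs_self _) (Complex.abs_im_le_norm z)
      have h2 : Real.sqrt 2 / 2 ≤ z.im / ‖z‖ := by
        rw [div_le_div_iff₀ (by norm_num) habs]
        nlinarith [hr2, him0, hs2pos, hs2]
      have hiff := Real.le_arcsin_iff_sin_le (x := Real.pi / 4)
        (y := z.im / ‖z‖)
        (Set.mem_Icc.2 ⟨by linarith, by linarith⟩)
        (Set.mem_Icc.2 ⟨by nlinarith [hs2pos], h1⟩)
      rw [hiff, Real.sin_pi_div_four]
      exact h2
    rcases le_or_gt 0 z.re with hx | hx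
    · -- right sector
      have ha2 : Complex.arg z ≤ Real.pi / 2 := Complex.arg_le_pi_div_two_iff.2 (Or.inl hx)
      have ha1 : ε ≤ Complex.arg z := by
        rw [Complex.arg_of_re_nonneg hx]
        linarith
      have hp' : |(-(B / 8) : ℝ)| ≤ B / 8 := by
        rw [abs_neg, abs_of_pos (by linarith)]
      have hray : ∀ θ ∈ ({ε, Real.pi / 2} : Set ℝ), (∀ r : ℝ, 0 ≤ r →
          A * (r * Real.sin θ) + 2 * (-(B / 8)) * (r * Real.cos θ)
            + (B / 2) * (r * Real.sin θ) ≤ 0) ∨ θ = Real.pi / 2 := by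
        intro θ hθ
        rcases hθ with rfl | hθ
        · left
          intro r hr
          have : A * (r * Real.sin ε) + 2 * (-(B / 8)) * (r * Real.cos ε)
              + (B / 2) * (r * Real.sin ε)
              = r * ((A + B / 2) * Real.sin ε - (B / 4) * Real.cos ε) := by ring
          rw [this, hkey]
          simp
        · right
          simpa using hθ
      have hres := oneSide F A B C hA hB hC hol hcont hgrow haxis (-(B / 8)) ε (Real.pi / 2)
        hε0 (by linarith) (by linarith) hp' hray hz0 ha1 ha2
      refine hres.trans ?_
      apply mul_le_mul_of_nonneg_left _ (by positivity)
      apply Real.exp_le_exp.2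
      have hre_le : z.re ≤ z.im := le_trans (le_abs_self _) hxy
      nlinarith
    · -- left sector
      have ha1 : Real.pi / 2 ≤ Complex.arg z := by
        rw [Complex.arg_of_re_neg_of_im_nonneg hx him0.le]
        linarith [Real.neg_pi_div_two_le_arcsin ((-z).im / ‖z‖)]
      have ha2 : Complex.arg z ≤ Real.pi - ε := by
        rw [Complex.arg_of_re_neg_of_im_nonneg hx him0.le]
        have hneg : (-z).im / ‖z‖ = -(z.im / ‖z‖) := by
          simp [neg_div]
        rw [hneg, Real.arcsin_neg]
        linarith
      have hp' : |(B / 8 : ℝ)| ≤ B / 8 := by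
        rw [abs_of_pos (by linarith)]
      have hray : ∀ θ ∈ ({Real.pi / 2, Real.pi - ε} : Set ℝ), (∀ r : ℝ, 0 ≤ r →
          A * (r * Real.sin θ) + 2 * (B / 8) * (r * Real.cos θ)
            + (B / 2) * (r * Real.sin θ) ≤ 0) ∨ θ = Real.pi / 2 := by
        intro θ hθ
        rcases hθ with rfl | hθ
        · right; rfl
        · left
          simp only [Set.mem_singleton_iff] at hθ
          subst hθ
          intro r hr
          rw [Real.sin_pi_sub, Real.cos_pi_sub]
          have : A * (r * Real.sin ε) + 2 * (B / 8) * (r * -Real.cos ε)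
              + (B / 2) * (r * Real.sin ε)
              = r * ((A + B / 2) * Real.sin ε - (B / 4) * Real.cos ε) := by ring
          rw [this, hkey]
          simp
      have hres := oneSide F A B C hA hB hC hol hcont hgrow haxis (B / 8) (Real.pi / 2)
        (Real.pi - ε) (by linarith) (by linarith) (by linarith) hp' hray hz0 ha1 ha2
      refine hres.trans ?_
      apply mul_le_mul_of_nonneg_left _ (by positivity)
      apply Real.exp_le_exp.2
      have hre_le : -z.re ≤ z.im := le_trans (neg_le_abs _) hxy
      nlinarith
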